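/- Let N ≥ 3, (λ₁, λ₂) ∈ Λ, and let μ₁ ≤ μ₂ ≤ ⋯ ≤ μ_N be real numbers satisfying μ_α + λ₁ μ_β + λ₂ μ_γ ≥ 0 and λ₁ μ_α + (1-(λ₁+λ₂)λ₂) μ_β ≥ 0 for all α < β < γ. If Σ_{α=1}^N μ_α = 0, then μ_α = 0 for all α. -/

import Mathlib

/-- Membership in the parameter set Λ. -/
def InLambda (x y : ℝ) : Prop :=
  0 ≤ y ∧ y ≤ x ∧ x ≤ 1 ∧ 0 < 1 - (x + y) * y ∧ 1 - (x + y) * y ≤ x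

theorem stmt_10 (N : ℕ) (hN : 3 ≤ N) (l1 l2 : ℝ) (hΛ : InLambda l1 l2)
    (μ : Fin N → ℝ) (hmono : Monotone μ)
    (h1 : ∀ α β γ : Fin N, α < β → β < γ → 0 ≤ μ α + l1 * μ β + l2 * μ γ)
    (h2 : ∀ α β : Fin N, α < β → 0 ≤ l1 * μ α + (1 - (l1 + l2) * l2) * μ β)
    (hsum : ∑ α, μ α = 0) :
    ∀ α, μ α = 0 := by
  obtain ⟨hy0, hyx, hx1, hcpos, hcl⟩ := hΛ
  set c : ℝ := 1 - (l1 + l2) * l2 with hc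
  have hl1 : 0 < l1 := lt_of_lt_of_le hcpos hcl
  haveI : NeZero N := ⟨by omega⟩
  have hμ0le : μ 0 ≤ 0 := by
    by_contra h
    push_neg at h
    have hpos : (0:ℝ) < ∑ α, μ α :=
      Finset.sum_pos (fun i _ => lt_of_lt_of_le h (hmono (Fin.zero_le i)))
        ⟨0, Finset.mem_univ _⟩
    rw [hsum] at hpos
    exact lt_irrefl _ hpos
  set S : ℝ := -μ 0 with hS
  have hS0 : 0 ≤ S := by simp [hS]; linarith
  have hkey : ∀ α : Fin N, α ≠ 0 → S ≤ μ α := by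
    intro α hα
    have h := h2 0 α ((Fin.pos_iff_ne_zero' α).mpr hα)
    have hmul : c * S ≤ c * μ α := by nlinarith
    exact le_of_mul_le_mul_left hmul hcpos
  have hsum' : ∑ α ∈ Finset.univ.erase (0 : Fin N), μ α = S := by
    have h := Finset.sum_erase_add Finset.univ μ (Finset.mem_univ (0 : Fin N))
    rw [hsum] at h
    simp [hS]; linarith
  have hcard : (Finset.univ.erase (0 : Fin N)).card = N - 1 := by
    rw [Finset.card_erase_of_mem (Finset.mem_univ _)]
    simp
  have hlb : ((N : ℝ) - 1) * S ≤ ∑ α ∈ Finset.univ.erase (0 : Fin N), μ α := by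
    have := Finset.card_nsmul_le_sum (Finset.univ.erase (0 : Fin N)) μ S
      (fun x hx => hkey x (Finset.ne_of_mem_erase hx))
    rw [hcard, nsmul_eq_mul] at this
    have hcast : ((N - 1 : ℕ) : ℝ) = (N : ℝ) - 1 := by
      have : (1:ℕ) ≤ N := by omega
      push_cast [this]; ring
    rwa [hcast] at this
  rw [hsum'] at hlb
  have hN3 : (3:ℝ) ≤ (N:ℝ) := by exact_mod_cast hN
  have hSzero : S = 0 := by nlinarith
  have hzero : ∀ α ∈ Finset.univ.erase (0 : Fin N), μ α = 0 := by
    rw [← Finset.sum_eq_zero_iff_of_nonneg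
      (fun x hx => le_trans hS0 (hkey x (Finset.ne_of_mem_erase hx)))]
    rw [hsum', hSzero]
  intro α
  by_cases hα : α = 0
  · rw [hα]; simp [hS] at hSzero; linarith
  · exact hzero α (Finset.mem_erase.mpr ⟨hα, Finset.mem_univ _⟩)
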